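/- For fixed μ ∈ ℝ, the function σ ↦ 2σ·Φ'(μ/σ) + μ·(2Φ(μ/σ) − 1) is strictly increasing on (0,∞), where Φ is the standard normal CDF and Φ' its density. Consequently, if Y₁ ~ N(μ,σ₁²) and Y₂ ~ N(μ,σ₂²) with 0 < σ₁ < σ₂, then E|Y₁| < E|Y₂|. -/

import Mathlib

open MeasureTheory ProbabilityTheory

open Real Set Filter
open scoped ENNReal NNReal

noncomputable def stdG (z : ℝ) : ℝ := (1 / Real.sqrt (2 * Real.pi)) * Real.exp (-z ^ 2 / 2)

lemma stdG_pos (z : ℝ) : 0 < stdG z := by unfold stdG; positivity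
lemma stdG_nonneg (z : ℝ) : 0 ≤ stdG z := (stdG_pos z).le
lemma stdG_cont : Continuous stdG := by unfold stdG; continuity
lemma stdG_neg (z : ℝ) : stdG (-z) = stdG z := by simp [stdG]
lemma stdG_eq : stdG = fun z => (1 / Real.sqrt (2 * Real.pi)) * Real.exp (-(1/2 : ℝ) * z ^ 2) :=
  funext fun z => by unfold stdG; ring_nf
lemma int_stdG : Integrable stdG := by
  rw [stdG_eq]; exact (integrable_exp_neg_mul_sq (by norm_num)).const_mul _
lemma int_mul_stdG : Integrable (fun z : ℝ => z * stdG z) := by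
  have h : (fun z : ℝ => z * stdG z)
      = fun z : ℝ => (1 / Real.sqrt (2 * Real.pi)) * (z * Real.exp (-(1/2 : ℝ) * z ^ 2)) :=
    funext fun z => by unfold stdG; ring_nf
  rw [h]; exact (integrable_mul_exp_neg_mul_sq (by norm_num)).const_mul _
lemma int_abs_mul_stdG : Integrable (fun z : ℝ => |z| * stdG z) := by
  refine int_mul_stdG.abs.congr (Filter.Eventually.of_forall fun z => ?_)
  show |z * stdG z| = _
  rw [abs_mul, abs_of_nonneg (stdG_nonneg z)]
lemma total_stdG : ∫ z : ℝ, stdG z = 1 := by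
  rw [stdG_eq]
  rw [MeasureTheory.integral_const_mul, integral_gaussian,
    show Real.pi / (1/2) = 2 * Real.pi by ring, one_div, inv_mul_cancel₀]
  positivity

-- derivative of -stdG is z * stdG z
lemma hasDerivAt_neg_stdG (z : ℝ) : HasDerivAt (fun y : ℝ => -stdG y) (z * stdG z) z := by
  have h1 : HasDerivAt (fun y : ℝ => -y ^ 2 / 2) (-z) z := by
    have := ((hasDerivAt_pow 2 z).neg.div_const 2)
    convert this using 1 <;> try rfl
    push_cast
    ring
  have h2 := (h1.exp.const_mul (1 / Real.sqrt (2 * Real.pi))).neg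
  unfold stdG
  convert h2 using 1 <;> try rfl
  ring

lemma stdG_tendsto_atTop : Tendsto stdG atTop (nhds 0) := by
  rw [stdG_eq]
  rw [show (0:ℝ) = (1 / Real.sqrt (2 * Real.pi)) * 0 by ring]
  refine Tendsto.const_mul _ ?_
  rw [Real.tendsto_exp_comp_nhds_zero]
  have h1 : Tendsto (fun z : ℝ => z ^ 2) atTop atTop := tendsto_pow_atTop two_ne_zero
  have h2 := tendsto_neg_atTop_atBot.comp (h1.atTop_div_const (by norm_num : (0:ℝ) < 2))
  exact h2.congr fun z => by simp [Function.comp]; ring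

lemma stdG_tendsto_atBot : Tendsto stdG atBot (nhds 0) := by
  have := stdG_tendsto_atTop.comp tendsto_neg_atBot_atTop
  refine this.congr fun z => ?_
  simp [stdG_neg]

lemma integral_Iic_mul_stdG (a : ℝ) : ∫ z in Iic a, z * stdG z = -stdG a := by
  have h := MeasureTheory.integral_Iic_of_hasDerivAt_of_tendsto'
    (f := fun y => -stdG y) (f' := fun z => z * stdG z) (a := a) (m := 0)
    (fun x _ => hasDerivAt_neg_stdG x) int_mul_stdG.integrableOn
    (by simpa using stdG_tendsto_atBot.neg)
  simpa using h

lemma integral_Ioi_mul_stdG (a : ℝ) : ∫ z in Ioi a, z * stdG z = stdG a := by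
  have h := MeasureTheory.integral_Ioi_of_hasDerivAt_of_tendsto'
    (f := fun y => -stdG y) (f' := fun z => z * stdG z) (a := a) (m := 0)
    (fun x _ => hasDerivAt_neg_stdG x) int_mul_stdG.integrableOn
    (by simpa using stdG_tendsto_atTop.neg)
  simpa using h

lemma integral_Ioi_stdG (a : ℝ) : ∫ z in Ioi a, stdG z = 1 - ∫ z in Iic a, stdG z := by
  have := intervalIntegral.integral_Iic_add_Ioi (b := a) int_stdG.integrableOn int_stdG.integrableOn
  rw [total_stdG] at this; linarith

lemma integral_Iic_stdG_neg (t : ℝ) : ∫ z in Iic (-t), stdG z = 1 - ∫ z in Iic t, stdG z := by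
  have h : ∫ z in Iic (-t), stdG z = ∫ x in Ioi t, stdG (-x) := (integral_comp_neg_Ioi t stdG).symm
  simp_rw [stdG_neg] at h
  rw [h, integral_Ioi_stdG]

-- FTC : derivative of the CDF
lemma hasDerivAt_Phi (a : ℝ) : HasDerivAt (fun t => ∫ z in Iic t, stdG z) (stdG a) a := by
  have key : ∀ t : ℝ, ∫ z in Iic t, stdG z = (∫ z in Iic 0, stdG z) + ∫ z in (0:ℝ)..t, stdG z := by
    intro t
    have := intervalIntegral.integral_Iic_sub_Iic (a := (0:ℝ)) (b := t)
      int_stdG.integrableOn int_stdG.integrableOn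
    linarith
  have hd : HasDerivAt (fun t => (∫ z in Iic 0, stdG z) + ∫ z in (0:ℝ)..t, stdG z) (stdG a) a := by
    refine HasDerivAt.const_add _ ?_
    exact intervalIntegral.integral_hasDerivAt_right int_stdG.intervalIntegrable
      stdG_cont.stronglyMeasurable.stronglyMeasurableAtFilter stdG_cont.continuousAt
  exact hd.congr_of_eventuallyEq (Filter.Eventually.of_forall key)

lemma hasDerivAt_F (μ : ℝ) {σ : ℝ} (hσ : 0 < σ) :
    HasDerivAt (fun s : ℝ => 2 * s * stdG (μ / s) + μ * (2 * (∫ z in Iic (μ / s), stdG z) - 1))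
      (2 * stdG (μ / σ)) σ := by
  have hσ' := hσ.ne'
  have hu : HasDerivAt (fun s : ℝ => μ / s) (-(μ / σ ^ 2)) σ := by
    have h := (hasDerivAt_inv hσ').const_mul μ
    simp only [div_eq_mul_inv]
    convert h using 1 <;> try rfl
    ring
  have hG : ∀ x : ℝ, HasDerivAt stdG (-x * stdG x) x := by
    intro x
    have := (hasDerivAt_neg_stdG x).neg
    simpa [neg_mul, Pi.neg_def] using this
  have hGc : HasDerivAt (fun s : ℝ => stdG (μ / s))
      ((-(μ / σ) * stdG (μ / σ)) * -(μ / σ ^ 2)) σ := (hG (μ / σ)).comp σ hu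
  have ha : HasDerivAt (fun s : ℝ => 2 * s) 2 σ := by
    simpa using (hasDerivAt_id σ).const_mul 2
  have h1 := ha.mul hGc
  have hPhi : HasDerivAt (fun s : ℝ => ∫ z in Iic (μ / s), stdG z)
      (stdG (μ / σ) * -(μ / σ ^ 2)) σ := (hasDerivAt_Phi (μ / σ)).comp σ hu
  have h2 : HasDerivAt (fun s : ℝ => μ * (2 * (∫ z in Iic (μ / s), stdG z) - 1))
      (μ * (2 * (stdG (μ / σ) * -(μ / σ ^ 2)))) σ :=
    ((hPhi.const_mul 2).sub_const 1).const_mul μ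
  have h := h1.add h2
  convert h using 1 <;> try rfl
  field_simp
  ring

lemma F_strictMono (μ : ℝ) :
    StrictMonoOn
      (fun σ : ℝ => 2 * σ * stdG (μ / σ) + μ * (2 * (∫ z in Iic (μ / σ), stdG z) - 1))
      (Ioi 0) := by
  apply strictMonoOn_of_deriv_pos (convex_Ioi 0)
  · intro x hx
    exact ((hasDerivAt_F μ hx).differentiableAt.continuousAt).continuousWithinAt
  · intro x hx
    rw [interior_Ioi] at hx
    rw [(hasDerivAt_F μ hx).deriv]
    have := stdG_pos (μ / x)
    linarith

lemma core_integral (μ : ℝ) {σ : ℝ} (hσ : 0 < σ) :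
    ∫ z : ℝ, stdG z * |σ * z + μ|
      = 2 * σ * stdG (μ / σ) + μ * (2 * (∫ z in Iic (μ / σ), stdG z) - 1) := by
  set a := -(μ / σ) with ha
  have hInt : Integrable (fun z : ℝ => stdG z * |σ * z + μ|) := by
    have hg : Integrable (fun z : ℝ => |σ| * (|z| * stdG z) + |μ| * stdG z) :=
      (int_abs_mul_stdG.const_mul |σ|).add (int_stdG.const_mul |μ|)
    refine hg.mono' ?_ (Filter.Eventually.of_forall fun z => ?_)
    · exact (stdG_cont.mul
        ((continuous_const.mul continuous_id).add continuous_const).abs).aestronglyMeasurable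
    · have h1 : |σ * z + μ| ≤ |σ| * |z| + |μ| := (abs_add_le _ _).trans (by rw [abs_mul])
      have h2 : ‖stdG z * |σ * z + μ|‖ = stdG z * |σ * z + μ| := by
        rw [Real.norm_eq_abs, abs_of_nonneg (mul_nonneg (stdG_nonneg z) (abs_nonneg _))]
      rw [h2]
      calc stdG z * |σ * z + μ| ≤ stdG z * (|σ| * |z| + |μ|) :=
            mul_le_mul_of_nonneg_left h1 (stdG_nonneg z)
        _ = |σ| * (|z| * stdG z) + |μ| * stdG z := by ring
  have hsplit := intervalIntegral.integral_Iic_add_Ioi (b := a)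
    hInt.integrableOn hInt.integrableOn
  have hleft : ∫ z in Iic a, stdG z * |σ * z + μ|
      = σ * stdG a - μ * ∫ z in Iic a, stdG z := by
    have hcongr : ∀ z ∈ Iic a, stdG z * |σ * z + μ|
        = (-σ) * (z * stdG z) + (-μ) * stdG z := by
      intro z hz
      have hz1 : σ * z ≤ σ * -(μ / σ) := mul_le_mul_of_nonneg_left hz hσ.le
      rw [mul_neg, mul_div_cancel₀ _ hσ.ne'] at hz1
      rw [abs_of_nonpos (by linarith)]
      ring
    rw [setIntegral_congr_fun measurableSet_Iic hcongr,
      integral_add ((int_mul_stdG.const_mul _).integrableOn)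
        ((int_stdG.const_mul _).integrableOn),
      MeasureTheory.integral_const_mul, MeasureTheory.integral_const_mul,
      integral_Iic_mul_stdG]
    ring
  have hright : ∫ z in Ioi a, stdG z * |σ * z + μ|
      = σ * stdG a + μ * (1 - ∫ z in Iic a, stdG z) := by
    have hcongr : ∀ z ∈ Ioi a, stdG z * |σ * z + μ|
        = σ * (z * stdG z) + μ * stdG z := by
      intro z hz
      have hz1 : σ * -(μ / σ) ≤ σ * z := mul_le_mul_of_nonneg_left (le_of_lt hz) hσ.le
      rw [mul_neg, mul_div_cancel₀ _ hσ.ne'] at hz1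
      rw [abs_of_nonneg (by linarith)]
      ring
    rw [setIntegral_congr_fun measurableSet_Ioi hcongr,
      integral_add ((int_mul_stdG.const_mul _).integrableOn)
        ((int_stdG.const_mul _).integrableOn),
      MeasureTheory.integral_const_mul, MeasureTheory.integral_const_mul,
      integral_Ioi_mul_stdG, integral_Ioi_stdG]
  rw [← hsplit, hleft, hright, ha, integral_Iic_stdG_neg, stdG_neg]
  ring

open ProbabilityTheory in
lemma gaussian_abs_integral (μ : ℝ) {σ : ℝ} (hσ : 0 < σ) :
    ∫ x, |x| ∂(gaussianReal μ ⟨σ ^ 2, sq_nonneg σ⟩)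
      = 2 * σ * stdG (μ / σ) + μ * (2 * (∫ z in Iic (μ / σ), stdG z) - 1) := by
  have hmap : gaussianReal μ ⟨σ ^ 2, sq_nonneg σ⟩
      = (gaussianReal 0 1).map (fun z => σ * z + μ) := by
    have hcomp : (fun z : ℝ => σ * z + μ) = (· + μ) ∘ (σ * ·) := rfl
    rw [hcomp, ← Measure.map_map (measurable_add_const μ) (measurable_const_mul σ),
      gaussianReal_map_const_mul, gaussianReal_map_add_const]
    norm_num
    rfl
  rw [hmap, integral_map (by fun_prop) continuous_abs.aestronglyMeasurable]
  rw [gaussianReal_of_var_ne_zero 0 one_ne_zero]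
  have hmeas : Measurable fun x => Real.toNNReal (gaussianPDFReal 0 1 x) :=
    (measurable_gaussianPDFReal 0 1).real_toNNReal
  have hwd := integral_withDensity_eq_integral_smul (μ := volume)
    (f := fun x => Real.toNNReal (gaussianPDFReal 0 1 x)) hmeas (fun z => |σ * z + μ|)
  have hpdf : ∀ z : ℝ, gaussianPDFReal 0 1 z = stdG z := by
    intro z
    simp only [gaussianPDFReal, stdG, NNReal.coe_one, mul_one, sub_zero, one_div]
  have hsmul : (fun z : ℝ => Real.toNNReal (gaussianPDFReal 0 1 z) • |σ * z + μ|)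
      = fun z : ℝ => stdG z * |σ * z + μ| := by
    funext z
    rw [NNReal.smul_def, Real.coe_toNNReal _ (gaussianPDFReal_nonneg 0 1 z), hpdf, smul_eq_mul]
  rw [show (gaussianPDF 0 1) = fun x => ((Real.toNNReal (gaussianPDFReal 0 1 x) : ℝ≥0) : ℝ≥0∞)
    from rfl, hwd, hsmul]
  exact core_integral μ hσ

open ProbabilityTheory in
lemma expectation_abs_eq (μ : ℝ) {Ω : Type} [MeasurableSpace Ω] (P : Measure Ω)
    (Y : Ω → ℝ) {σ : ℝ} (hσ : 0 < σ)
    (hY : P.map Y = gaussianReal μ ⟨σ ^ 2, sq_nonneg σ⟩) :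
    (∫ ω, |Y ω| ∂P) = 2 * σ * stdG (μ / σ) + μ * (2 * (∫ z in Iic (μ / σ), stdG z) - 1) := by
  have hae : AEMeasurable Y P := by
    by_contra h
    rw [Measure.map_of_not_aemeasurable h] at hY
    have h1 := congrArg (fun m : Measure ℝ => m Set.univ) hY
    simp [measure_univ] at h1
    have h3 := (instIsProbabilityMeasureGaussianReal μ ⟨σ ^ 2, sq_nonneg σ⟩).measure_univ
    rw [← h1] at h3
    simp at h3
  have h2 : (∫ ω, |Y ω| ∂P) = ∫ x, |x| ∂(P.map Y) :=
    (integral_map hae continuous_abs.aestronglyMeasurable).symm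
  rw [h2, hY, gaussian_abs_integral μ hσ]

theorem abs_moment_strictMono (μ : ℝ) :
    StrictMonoOn (fun σ : ℝ =>
      2 * σ * ((1 / Real.sqrt (2 * Real.pi)) * Real.exp (-(μ / σ) ^ 2 / 2))
        + μ * (2 * (∫ z in Set.Iic (μ / σ),
            (1 / Real.sqrt (2 * Real.pi)) * Real.exp (-z ^ 2 / 2)) - 1))
      (Set.Ioi 0) ∧
    ∀ {Ω : Type} [MeasurableSpace Ω] (P : Measure Ω), ∀ (_ : IsProbabilityMeasure P),
      ∀ (Y₁ Y₂ : Ω → ℝ) (σ₁ σ₂ : ℝ), 0 < σ₁ → σ₁ < σ₂ →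
      P.map Y₁ = gaussianReal μ ⟨σ₁ ^ 2, sq_nonneg σ₁⟩ →
      P.map Y₂ = gaussianReal μ ⟨σ₂ ^ 2, sq_nonneg σ₂⟩ →
      (∫ ω, |Y₁ ω| ∂P) < ∫ ω, |Y₂ ω| ∂P := by
  constructor
  · exact F_strictMono μ
  · intro Ω _ P _ Y₁ Y₂ σ₁ σ₂ h1 h12 hY₁ hY₂
    rw [expectation_abs_eq μ P Y₁ h1 hY₁, expectation_abs_eq μ P Y₂ (h1.trans h12) hY₂]
    exact F_strictMono μ (mem_Ioi.2 h1) (mem_Ioi.2 (h1.trans h12)) h12
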